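/- For every integer n ≥ 2 and every pair of permutations u, v ∈ S_n, there exists a directed path from u to v in the quantum Bruhat graph Γ_n. -/

import Mathlib

open Equiv

/-- Number of inversions of a permutation of `Fin n` (its Coxeter length). -/
def len (n : ℕ) (w : Equiv.Perm (Fin n)) : ℕ :=
  (Finset.univ.filter (fun p : Fin n × Fin n => p.1 < p.2 ∧ w p.2 < w p.1)).card

/-- The endpoint of the edge labeled `p = (i, j)` starting at `u`: right
multiplication by the transposition `s_{ij}`. -/
def step (n : ℕ) (u : Equiv.Perm (Fin n)) (p : Fin n × Fin n) : Equiv.Perm (Fin n) :=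
  u * Equiv.swap p.1 p.2

/-- `u → u·s_{ij}` is an edge of the quantum Bruhat graph `Γ_n`:
either `ℓ(u s_{ij}) = ℓ(u) + 1`, or `ℓ(u s_{ij}) = ℓ(u) + 1 - 2(j - i)`. -/
def isQBEdge (n : ℕ) (u : Equiv.Perm (Fin n)) (p : Fin n × Fin n) : Prop :=
  p.1 < p.2 ∧
    (len n (step n u p) = len n u + 1 ∨
     len n (step n u p) + 2 * ((p.2 : ℕ) - (p.1 : ℕ)) = len n u + 1)

/-- The weight in `ℤ^{n-1}` of the edge labeled `p = (i,j)` starting at `u`: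
`0` for a Bruhat cover, and `e_i + e_{i+1} + ⋯ + e_{j-1}` for a quantum edge.
(Here coordinates of `Fin (n-1)` are `0`-based: index `k` is the paper's `q_{k+1}`.) -/
def edgeWeight (n : ℕ) (u : Equiv.Perm (Fin n)) (p : Fin n × Fin n) : Fin (n - 1) → ℤ :=
  if len n (step n u p) = len n u + 1 then 0
  else fun k => if (p.1 : ℕ) ≤ (k : ℕ) ∧ (k : ℕ) < (p.2 : ℕ) then 1 else 0

/-- `isPath n u L v` : the list of labels `L` encodes a directed path from `u` to `v`
in the quantum Bruhat graph `Γ_n`. -/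
def isPath (n : ℕ) : Equiv.Perm (Fin n) → List (Fin n × Fin n) → Equiv.Perm (Fin n) → Prop
  | u, [], v => u = v
  | u, p :: ps, v => isQBEdge n u p ∧ isPath n (step n u p) ps v

/-- The weight of a directed path: the sum in `ℤ^{n-1}` of the weights of its edges. -/
def pathWeight (n : ℕ) : Equiv.Perm (Fin n) → List (Fin n × Fin n) → (Fin (n - 1) → ℤ)
  | _, [] => 0
  | u, p :: ps => edgeWeight n u p + pathWeight n (step n u p) ps

/-- Every edge of the path is length-increasing (a Bruhat cover). -/
def allUp (n : ℕ) : Equiv.Perm (Fin n) → List (Fin n × Fin n) → Prop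
  | _, [] => True
  | u, p :: ps => len n (step n u p) = len n u + 1 ∧ allUp n (step n u p) ps

/-- A path with labels `(a_1,b_1), …, (a_i,b_i)` is `y_k^i`-admissible if
`a_1 ≤ ⋯ ≤ a_i ≤ k < b_1, …, b_i` and the `b_t` are pairwise distinct.
(`k : Fin (n-1)` is `0`-based: it stands for the paper's `k+1`.) -/
def yAdm (n : ℕ) (k : Fin (n - 1)) (L : List (Fin n × Fin n)) : Prop :=
  List.Chain' (· ≤ ·) (L.map Prod.fst) ∧
  (∀ p ∈ L, (p.1 : ℕ) ≤ (k : ℕ) ∧ (k : ℕ) < (p.2 : ℕ)) ∧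
  (L.map Prod.snd).Nodup

/-- A path is `y^β`-admissible if it is a concatenation `P_1 ∘ ⋯ ∘ P_{n-1}` where
`P_k` is `y_k^{β_k}`-admissible. -/
def yBetaAdm (n : ℕ) (β : Fin (n - 1) → ℕ) (L : List (Fin n × Fin n)) : Prop :=
  ∃ Ls : Fin (n - 1) → List (Fin n × Fin n),
    L = (List.ofFn Ls).flatten ∧
    ∀ k : Fin (n - 1), (Ls k).length = β k ∧ yAdm n k (Ls k)

/-- A path with labels `(a_1,b_1), …, (a_l,b_l)` is admissible if there are
`k_1 ≤ ⋯ ≤ k_l` with `a_t ≤ k_t < b_t` and the pairs `(k_t, b_t)` pairwise distinct. -/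
def Adm (n : ℕ) (L : List (Fin n × Fin n)) : Prop :=
  ∃ ks : List ℕ, ks.length = L.length ∧ List.Chain' (· ≤ ·) ks ∧
    (∀ pr ∈ ks.zip L, (pr.2.1 : ℕ) ≤ pr.1 ∧ pr.1 < (pr.2.2 : ℕ)) ∧
    (ks.zip (L.map Prod.snd)).Nodup

/-- The longest permutation `w_o : i ↦ n + 1 - i` (0-based: `i ↦ n - 1 - i`). -/
def wo (n : ℕ) : Equiv.Perm (Fin n) :=
  Function.Involutive.toPerm Fin.rev (fun i => Fin.rev_rev i)

/-- The adjacent swap `s_i` preserves the order of any pair other than `(i, i+1)`. -/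
lemma swap_lt_of_lt {m : ℕ} (i : Fin m) {a b : Fin (m+1)} (hab : a < b)
    (hne : ¬(a = i.castSucc ∧ b = i.succ)) :
    Equiv.swap i.castSucc i.succ a < Equiv.swap i.castSucc i.succ b := by
  have hcd : ((i.castSucc : Fin (m+1)) : ℕ) + 1 = ((i.succ : Fin (m+1)) : ℕ) := by simp
  by_cases ha1 : a = i.castSucc
  · have hb2 : b ≠ i.succ := fun h => hne ⟨ha1, h⟩
    have hb1 : b ≠ i.castSucc := fun h => absurd hab (by simp [ha1, h])
    rw [ha1, Equiv.swap_apply_left, Equiv.swap_apply_of_ne_of_ne hb1 hb2]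
    have h1 : ((i.castSucc : Fin (m+1)) : ℕ) < (b : ℕ) := by rw [← ha1]; exact hab
    have h2 : (b : ℕ) ≠ ((i.succ : Fin (m+1)) : ℕ) := fun h => hb2 (Fin.ext h)
    exact Fin.lt_def.2 (by omega)
  · by_cases ha2 : a = i.succ
    · have hdb : ((i.succ : Fin (m+1)) : ℕ) < (b : ℕ) := by rw [← ha2]; exact hab
      have hb1 : b ≠ i.castSucc := fun h => by
        rw [h] at hdb; omega
      have hb2 : b ≠ i.succ := fun h => by rw [h] at hdb; omega
      rw [ha2, Equiv.swap_apply_right, Equiv.swap_apply_of_ne_of_ne hb1 hb2]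
      exact Fin.lt_def.2 (by omega)
    · rw [Equiv.swap_apply_of_ne_of_ne ha1 ha2]
      by_cases hb1 : b = i.castSucc
      · rw [hb1, Equiv.swap_apply_left]
        have : (a : ℕ) < ((i.castSucc : Fin (m+1)) : ℕ) := by rw [← hb1]; exact hab
        exact Fin.lt_def.2 (by omega)
      · by_cases hb2 : b = i.succ
        · rw [hb2, Equiv.swap_apply_right]
          have h1 : (a : ℕ) < ((i.succ : Fin (m+1)) : ℕ) := by rw [← hb2]; exact hab
          have h2 : (a : ℕ) ≠ ((i.castSucc : Fin (m+1)) : ℕ) := fun h => ha1 (Fin.ext h)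
          exact Fin.lt_def.2 (by omega)
        · rw [Equiv.swap_apply_of_ne_of_ne hb1 hb2]; exact hab

/-- Right multiplication by an adjacent transposition changes the length by exactly one. -/
lemma len_mul_adjacent_swap {m : ℕ} (w : Equiv.Perm (Fin (m+1))) (i : Fin m) :
    len (m+1) (w * Equiv.swap i.castSucc i.succ) = len (m+1) w + 1 ∨
    len (m+1) (w * Equiv.swap i.castSucc i.succ) + 1 = len (m+1) w := by
  set s := Equiv.swap i.castSucc i.succ with hs
  set x : Fin (m+1) × Fin (m+1) := (i.castSucc, i.succ) with hx
  set A := Finset.univ.filter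
    (fun p : Fin (m+1) × Fin (m+1) => p.1 < p.2 ∧ w p.2 < w p.1) with hA
  set B := Finset.univ.filter
    (fun p : Fin (m+1) × Fin (m+1) => p.1 < p.2 ∧ (w * s) p.2 < (w * s) p.1) with hB
  have hlenA : len (m+1) w = A.card := rfl
  have hlenB : len (m+1) (w * s) = B.card := rfl
  have hss : ∀ a : Fin (m+1), s (s a) = a := fun a => Equiv.swap_apply_self _ _ a
  have hnex : ∀ a b : Fin (m+1), ¬((s a, s b) = x) → True := fun _ _ _ => trivial
  -- the forward map A.erase x → B.erase x
  have keyAB : ∀ p : Fin (m+1) × Fin (m+1), p ∈ A.erase x → (s p.1, s p.2) ∈ B.erase x := by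
    rintro ⟨a, b⟩ hp
    rw [Finset.mem_erase, hA, Finset.mem_filter] at hp
    obtain ⟨hpx, -, hab, hw⟩ := hp
    have hne : ¬(a = i.castSucc ∧ b = i.succ) := by
      rintro ⟨h1, h2⟩; exact hpx (by simp [hx, h1, h2])
    rw [Finset.mem_erase, hB, Finset.mem_filter]
    refine ⟨?_, Finset.mem_univ _, swap_lt_of_lt i hab hne, ?_⟩
    · intro h
      rw [hx, Prod.mk.injEq] at h
      have ha : a = i.succ := by
        have := congrArg s h.1; rwa [hss, hs, Equiv.swap_apply_left] at this
      have hb : b = i.castSucc := by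
        have := congrArg s h.2; rwa [hss, hs, Equiv.swap_apply_right] at this
      rw [ha, hb] at hab
      exact absurd hab (not_lt.2 (le_of_lt ((Fin.castSucc_lt_succ : i.castSucc < i.succ))))
    · simpa [Equiv.Perm.mul_apply, hss] using hw
  -- the backward map B.erase x → A.erase x
  have keyBA : ∀ p : Fin (m+1) × Fin (m+1), p ∈ B.erase x → (s p.1, s p.2) ∈ A.erase x := by
    rintro ⟨a, b⟩ hp
    rw [Finset.mem_erase, hB, Finset.mem_filter] at hp
    obtain ⟨hpx, -, hab, hw⟩ := hp
    have hne : ¬(a = i.castSucc ∧ b = i.succ) := by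
      rintro ⟨h1, h2⟩; exact hpx (by simp [hx, h1, h2])
    rw [Finset.mem_erase, hA, Finset.mem_filter]
    refine ⟨?_, Finset.mem_univ _, swap_lt_of_lt i hab hne, ?_⟩
    · intro h
      rw [hx, Prod.mk.injEq] at h
      have ha : a = i.succ := by
        have := congrArg s h.1; rwa [hss, hs, Equiv.swap_apply_left] at this
      have hb : b = i.castSucc := by
        have := congrArg s h.2; rwa [hss, hs, Equiv.swap_apply_right] at this
      rw [ha, hb] at hab
      exact absurd hab (not_lt.2 (le_of_lt ((Fin.castSucc_lt_succ : i.castSucc < i.succ))))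
    · simpa [Equiv.Perm.mul_apply] using hw
  have hcard : (A.erase x).card = (B.erase x).card := by
    refine Finset.card_bij' (fun p _ => (s p.1, s p.2)) (fun p _ => (s p.1, s p.2))
      keyAB keyBA ?_ ?_
    · rintro ⟨a, b⟩ _; simp [hss]
    · rintro ⟨a, b⟩ _; simp [hss]
  have hlt : i.castSucc < i.succ := (Fin.castSucc_lt_succ : i.castSucc < i.succ)
  have hxB : x ∈ B ↔ w i.castSucc < w i.succ := by
    rw [hB, Finset.mem_filter]
    simp [hx, hlt, Equiv.Perm.mul_apply, hs]
  have hxA : x ∈ A ↔ w i.succ < w i.castSucc := by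
    rw [hA, Finset.mem_filter]; simp [hx, hlt]
  by_cases h : w i.castSucc < w i.succ
  · left
    have hxB' : x ∈ B := hxB.2 h
    have hxA' : x ∉ A := fun hm => absurd (hxA.1 hm) (not_lt.2 (le_of_lt h))
    rw [hlenA, hlenB, ← Finset.card_erase_add_one hxB', ← hcard,
      Finset.erase_eq_of_notMem hxA']
  · right
    have hne : w i.succ ≠ w i.castSucc := fun hh =>
      absurd (w.injective hh) (Fin.ne_of_gt hlt)
    have h' : w i.succ < w i.castSucc := lt_of_le_of_ne (not_lt.1 h) hne
    have hxA' : x ∈ A := hxA.2 h'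
    have hxB' : x ∉ B := fun hm => h (hxB.1 hm)
    rw [hlenA, hlenB, ← Finset.card_erase_add_one hxA', hcard,
      Finset.erase_eq_of_notMem hxB']

/-- Every adjacent transposition gives an edge of the quantum Bruhat graph. -/
lemma adj_isQBEdge {m : ℕ} (u : Equiv.Perm (Fin (m+1))) (i : Fin m) :
    isQBEdge (m+1) u (i.castSucc, i.succ) := by
  refine ⟨(Fin.castSucc_lt_succ : i.castSucc < i.succ), ?_⟩
  have hstep : step (m+1) u (i.castSucc, i.succ) = u * Equiv.swap i.castSucc i.succ := rfl
  have hd : (((i.castSucc, i.succ) : Fin (m+1) × Fin (m+1)).2 : ℕ)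
      - (((i.castSucc, i.succ) : Fin (m+1) × Fin (m+1)).1 : ℕ) = 1 := by simp
  rcases len_mul_adjacent_swap u i with h | h
  · left; rw [hstep]; exact h
  · right; rw [hstep, hd]; omega

/-- Concatenation of paths. -/
lemma isPath_append {n : ℕ} {u v w : Equiv.Perm (Fin n)} {L M : List (Fin n × Fin n)}
    (h1 : isPath n u L v) (h2 : isPath n v M w) : isPath n u (L ++ M) w := by
  induction L generalizing u with
  | nil =>
    have : u = v := h1
    simpa [this] using h2
  | cons p ps ih => exact ⟨h1.1, ih h1.2⟩

/-- For every `n ≥ 2` and every pair of permutations `u, v ∈ S_n`, there exists a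
directed path from `u` to `v` in the quantum Bruhat graph `Γ_n`. -/
theorem quantum_bruhat_graph_strongly_connected (n : ℕ) (hn : 2 ≤ n)
    (u v : Equiv.Perm (Fin n)) :
    ∃ L : List (Fin n × Fin n), isPath n u L v := by
  obtain ⟨m, rfl⟩ : ∃ m, n = m + 1 := ⟨n - 1, by omega⟩
  have key : ∀ g : Equiv.Perm (Fin (m+1)), ∀ w : Equiv.Perm (Fin (m+1)),
      ∃ L, isPath (m+1) w L (w * g) := by
    let P : Submonoid (Equiv.Perm (Fin (m+1))) :=
      { carrier := {g | ∀ w : Equiv.Perm (Fin (m+1)), ∃ L, isPath (m+1) w L (w * g)}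
        one_mem' := fun w => ⟨[], by show w = w * 1; rw [mul_one]⟩
        mul_mem' := by
          rintro g h hg hh w
          obtain ⟨L, hL⟩ := hg w
          obtain ⟨M, hM⟩ := hh (w * g)
          exact ⟨L ++ M, isPath_append hL (by rwa [mul_assoc] at hM)⟩ }
    intro g
    have hg : g ∈ Submonoid.closure
        (Set.range fun i : Fin m ↦ Equiv.swap i.castSucc i.succ) := by
      rw [Equiv.Perm.mclosure_swap_castSucc_succ]; exact Submonoid.mem_top g
    have : g ∈ P := by
      refine Submonoid.closure_le.2 ?_ hg
      rintro _ ⟨i, rfl⟩ w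
      exact ⟨[(i.castSucc, i.succ)], adj_isQBEdge w i, rfl⟩
    exact this
  obtain ⟨L, hL⟩ := key (u⁻¹ * v) u
  exact ⟨L, by rwa [mul_inv_cancel_left] at hL⟩
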